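/- Let k ≥ 2 and define h_k(n) = ((2n+1)(2n+3)···(2n+2k+1)) / lcm(2n+1, 2n+3, ..., 2n+2k+1) for positive integers n. Then h_k is periodic and its smallest period equals L_k / (2^{⌊log_2 k⌋} · D_k), where L_k = lcm(1,...,k) and D_k = p^{⌊log_p k⌋} if v_p(k+1) ≥ ⌊log_p k⌋ for some odd prime p ≤ k, and D_k = 1 otherwise. -/

import Mathlib

open Finset



/-- number of indices `i < k+1` with `q ∣ 2n+2i+1` -/
def aux19c (k q n : ℕ) : ℕ := ((range (k+1)).filter (fun i => q ∣ 2*n + 2*i + 1)).card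

lemma aux19_odd_dvd_iff {q x : ℕ} (hq : Odd q) : q ∣ 2 * x ↔ q ∣ x := by
  constructor
  · intro h
    have hco : Nat.Coprime q 2 := Odd.coprime_two_right hq
    exact (Nat.Coprime.dvd_of_dvd_mul_left hco h)
  · exact fun h => h.mul_left 2

lemma aux19_dvd_shift_iff {q m r : ℕ} (hqr : q = 2*r+1) :
    q ∣ m + r + 1 ↔ q ∣ 2*m + 1 := by
  have hq : Odd q := ⟨r, by omega⟩
  have h2 : 2 * (m + r + 1) = (2*m+1) + q := by omega
  constructor
  · intro h
    have h3 := (aux19_odd_dvd_iff hq).mpr h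
    rw [h2] at h3
    exact (Nat.dvd_add_self_right).mp h3
  · intro h
    have h3 : q ∣ (2*m+1) + q := (Nat.dvd_add_self_right).mpr h
    rw [← h2] at h3
    exact (aux19_odd_dvd_iff hq).mp h3

/-- `F q m` counts `x < m` with `q ∣ 2x+1`. -/
lemma aux19_F_formula (q r : ℕ) (hqr : q = 2*r+1) (m : ℕ) :
    ((range m).filter (fun x => q ∣ 2*x + 1)).card = (m + r) / q := by
  induction m with
  | zero => simp [Nat.div_eq_of_lt (by omega : r < q)]
  | succ m ih =>
    rw [Finset.range_add_one, Finset.filter_insert]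
    have hstep : (m + 1 + r) / q = (m + r) / q + if q ∣ m + r + 1 then 1 else 0 := by
      have := Nat.succ_div (a := m + r) (b := q)
      simpa [Nat.add_right_comm] using this
    by_cases h : q ∣ 2*m + 1
    · rw [if_pos h, Finset.card_insert_of_notMem (by simp), ih, hstep,
        if_pos ((aux19_dvd_shift_iff hqr).mpr h)]
    · rw [if_neg h, ih, hstep, if_neg (fun hc => h ((aux19_dvd_shift_iff hqr).mp hc))]
      omega

/-- Master formula for the count. -/
lemma aux19c_formula (k q n r : ℕ) (hqr : q = 2*r+1) :
    aux19c k q n = ((n + r) % q + (k + 1)) / q := by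
  have hq0 : 0 < q := by omega
  -- split range (n+k+1)
  have hsplit : range (n + (k+1)) = range n ∪ (range (k+1)).image (fun i => n + i) := by
    ext x
    simp only [mem_union, mem_range, mem_image]
    constructor
    · intro hx
      by_cases h : x < n
      · exact Or.inl h
      · exact Or.inr ⟨x - n, by omega, by omega⟩
    · rintro (h | ⟨i, hi, rfl⟩) <;> omega
  have hdisj : Disjoint (range n) ((range (k+1)).image (fun i => n + i)) := by
    rw [Finset.disjoint_left]
    rintro x hx hx2
    obtain ⟨i, _, rfl⟩ := Finset.mem_image.mp hx2
    exact absurd (mem_range.mp hx) (by omega)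
  have key : ((range (n+(k+1))).filter (fun x => q ∣ 2*x + 1)).card
      = ((range n).filter (fun x => q ∣ 2*x + 1)).card + aux19c k q n := by
    rw [hsplit, Finset.filter_union,
      Finset.card_union_of_disjoint (Finset.disjoint_filter_filter hdisj)]
    congr 1
    rw [Finset.filter_image, Finset.card_image_of_injective _ (add_right_injective n)]
    unfold aux19c
    congr 1
    apply Finset.filter_congr
    intro i _
    have : 2 * (n + i) + 1 = 2*n + 2*i + 1 := by ring
    simp [this]
  rw [aux19_F_formula q r hqr, aux19_F_formula q r hqr] at key
  have h1 : n + (k+1) + r = ((n+r) % q + (k+1)) + q * ((n+r)/q) := by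
    have := Nat.mod_add_div (n+r) q
    omega
  have h2 : (n + (k+1) + r) / q = ((n+r) % q + (k+1)) / q + (n+r)/q := by
    rw [h1, Nat.add_mul_div_left _ _ hq0]
  omega

lemma aux19c_pos {k q n : ℕ} (hq : Odd q) (hqk : q ≤ k + 1) : 1 ≤ aux19c k q n := by
  obtain ⟨r, hr⟩ := hq
  rw [aux19c_formula k q n r (by omega)]
  rw [Nat.le_div_iff_mul_le (by omega : 0 < q)]
  omega

lemma aux19c_le_one {k q n : ℕ} (hq : Odd q) (hqk : k < q) : aux19c k q n ≤ 1 := by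
  obtain ⟨r, hr⟩ := hq
  rw [aux19c_formula k q n r (by omega)]
  have h2 : (n + r) % q < q := Nat.mod_lt _ (by omega)
  have : ((n + r) % q + (k + 1)) / q < 2 := by
    rw [Nat.div_lt_iff_lt_mul (by omega : 0 < q)]
    omega
  omega

lemma aux19c_const {k q n : ℕ} (hq : Odd q) (hdvd : q ∣ k + 1) :
    aux19c k q n = (k+1) / q := by
  obtain ⟨r, hr⟩ := hq
  obtain ⟨m, hm⟩ := hdvd
  rw [aux19c_formula k q n r (by omega), hm,
    Nat.add_mul_div_left _ _ (by omega : 0 < q),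
    Nat.div_eq_of_lt (Nat.mod_lt _ (by omega)), Nat.mul_div_cancel_left _ (by omega)]
  omega

lemma aux19c_shift {k q n T : ℕ} (hdvd : q ∣ T) :
    aux19c k q (n + T) = aux19c k q n := by
  unfold aux19c
  congr 1
  apply Finset.filter_congr
  intro i _
  have h1 : 2*(n+T) + 2*i + 1 = 2*T + (2*n + 2*i + 1) := by ring
  rw [h1]
  have h2 : q ∣ 2*T := Dvd.dvd.mul_left hdvd 2
  simp [Nat.dvd_add_right h2]

/-- value of count in terms of `u = (n+r) % q` -/
lemma aux19c_val (k q n r : ℕ) (hqr : q = 2*r+1) :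
    aux19c k q n = k / q + (if q ≤ (n + r) % q + k % q + 1 then 1 else 0) := by
  rw [aux19c_formula k q n r hqr]
  have hq0 : 0 < q := by omega
  have hu : (n + r) % q < q := Nat.mod_lt _ hq0
  set u := (n + r) % q with hu_def
  have hk : u + (k + 1) = (u + k % q + 1) + q * (k / q) := by
    have := Nat.mod_add_div k q
    omega
  rw [hk, Nat.add_mul_div_left _ _ hq0]
  have hb : k % q < q := Nat.mod_lt _ hq0
  by_cases h : q ≤ u + k % q + 1
  · have h1 : (u + k % q + 1) / q = 1 := by
      have : u + k % q + 1 - q < q := by omega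
      rw [Nat.div_eq_sub_div hq0 h, Nat.div_eq_of_lt this]
    rw [h1, if_pos h]
    omega
  · rw [Nat.div_eq_of_lt (by omega), if_neg h]
    omega

/-- Witness: if `q = p^e ≤ k`, `q` odd, and `q ∤ k+1`, the count is not
`p^(e-1)`-periodic. -/
lemma aux19c_witness {k p e : ℕ} (hp : 2 ≤ p) (hodd : Odd (p^e)) (he : 1 ≤ e)
    (hqk : p ^ e ≤ k) (hndvd : ¬ p ^ e ∣ k + 1) :
    ∃ n, 1 ≤ n ∧ aux19c k (p^e) (n + p^(e-1)) ≠ aux19c k (p^e) n := by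
  set q := p ^ e with hq_def
  set h' := p ^ (e-1) with hh_def
  have hq_eq : q = p * h' := by
    rw [hq_def, hh_def, ← pow_succ']
    congr 1
    omega
  have hh1 : 1 ≤ h' := Nat.pow_pos (by omega)
  have hhq : h' < q := by
    rw [hq_eq]; nlinarith
  obtain ⟨r, hr⟩ := hodd
  have hq3 : 3 ≤ q := by
    have : 2 ≤ q := le_trans hp (Nat.le_self_pow (by omega) p)
    omega
  set b := k % q with hb_def
  have hb : b < q := Nat.mod_lt _ (by omega)
  have ha : 1 ≤ k / q := Nat.one_le_div_iff (by omega) |>.mpr hqk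
  have hbne : b ≠ q - 1 := by
    intro hc
    apply hndvd
    have : k + 1 = q * (k/q) + (b + 1) := by
      have := Nat.mod_add_div k q
      omega
    rw [this, hc]
    have : q - 1 + 1 = q := by omega
    rw [this]
    exact Nat.dvd_add (Dvd.intro _ rfl) (dvd_refl q)
  -- β := q - b - 1 ∈ [1, q-1]
  -- choose target u
  set u := if q ≤ q - b - 1 + h' then q - 1 else q - b - 2 with hu_def
  have hu : u < q := by
    rw [hu_def]; split <;> omega
  -- choose n with (n + r) % q = u
  refine ⟨u + (q - r), by omega, ?_⟩
  have hrq : r < q := by omega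
  have hn1 : (u + (q - r) + r) = u + q := by omega
  have hn1' : (u + (q - r) + r) % q = u := by
    rw [hn1, Nat.add_mod_right, Nat.mod_eq_of_lt hu]
  have hn2 : (u + (q - r) + h' + r) % q = (u + h') % q := by
    have : u + (q - r) + h' + r = (u + h') + q := by omega
    rw [this, Nat.add_mod_right]
  rw [aux19c_val k q _ r hr, aux19c_val k q _ r hr, hn1', hn2]
  rw [← hb_def]
  by_cases hcase : q ≤ q - b - 1 + h'
  · -- u = q - 1; (u + h') % q = h' - 1
    have hu_eq : u = q - 1 := by rw [hu_def, if_pos hcase]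
    have hmod : (u + h') % q = h' - 1 := by
      have : u + h' = (h' - 1) + q := by omega
      rw [this, Nat.add_mod_right, Nat.mod_eq_of_lt (by omega)]
    rw [hmod, hu_eq]
    -- h' - 1 + b + 1 < q  (since b + 1 ≤ h' and q = p*h' ≥ 2h')
    have hqge : 2 * h' ≤ q := by rw [hq_eq]; nlinarith
    have hno : ¬ q ≤ h' - 1 + b + 1 := by omega
    have hyes : q ≤ q - 1 + b + 1 := by omega
    simp only [if_pos hyes, if_neg hno]
    omega
  · -- u = q - b - 2, u + h' < q and ≥ q - b - 1
    have hu_eq : u = q - b - 2 := by rw [hu_def, if_neg hcase]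
    have hlt : u + h' < q := by omega
    have hmod : (u + h') % q = u + h' := Nat.mod_eq_of_lt hlt
    rw [hmod, hu_eq]
    have hno : ¬ q ≤ q - b - 2 + b + 1 := by omega
    have hyes : q ≤ q - b - 2 + h' + b + 1 := by omega
    simp only [if_pos hyes, if_neg hno]
    omega

def aux19P (k n : ℕ) : ℕ := ∏ i ∈ range (k+1), (2*n + 2*i + 1)
def aux19L (k n : ℕ) : ℕ := (range (k+1)).lcm (fun i => 2*n + 2*i + 1)
def aux19H (k n : ℕ) : ℕ := aux19P k n / aux19L k n

lemma aux19P_ne (k n : ℕ) : aux19P k n ≠ 0 := by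
  unfold aux19P
  exact Finset.prod_ne_zero_iff.mpr (fun i _ => by omega)

lemma aux19L_dvd (k n : ℕ) : aux19L k n ∣ aux19P k n := by
  apply Finset.lcm_dvd
  intro i hi
  exact Finset.dvd_prod_of_mem _ hi

lemma aux19L_ne (k n : ℕ) : aux19L k n ≠ 0 :=
  fun h => aux19P_ne k n (Nat.eq_zero_of_zero_dvd (h ▸ aux19L_dvd k n))

lemma aux19H_ne (k n : ℕ) : aux19H k n ≠ 0 := by
  unfold aux19H
  have := Nat.div_pos (Nat.le_of_dvd (Nat.pos_of_ne_zero (aux19P_ne k n)) (aux19L_dvd k n))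
    (Nat.pos_of_ne_zero (aux19L_ne k n))
  omega

lemma aux19H_mul (k n : ℕ) : aux19H k n * aux19L k n = aux19P k n :=
  Nat.div_mul_cancel (aux19L_dvd k n)

lemma aux19_lcm_fact {s : Finset ℕ} {f : ℕ → ℕ} (hf : ∀ i ∈ s, f i ≠ 0) (p : ℕ) :
    (s.lcm f).factorization p = s.sup fun i => (f i).factorization p := by
  classical
  induction s using Finset.induction_on with
  | empty => simp
  | insert a s ha ih =>
    rw [Finset.lcm_insert, Finset.sup_insert]
    have hs : s.lcm f ≠ 0 := by
      intro h
      rw [Finset.lcm_eq_zero_iff] at h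
      obtain ⟨i, hi, hz⟩ := h
      exact hf i (Finset.mem_insert_of_mem hi) hz
    have hfa : f a ≠ 0 := hf a (Finset.mem_insert_self a s)
    have hl : lcm (f a) (s.lcm f) = Nat.lcm (f a) (s.lcm f) := rfl
    rw [hl, Nat.factorization_lcm hfa hs, Finsupp.sup_apply,
      ih (fun i hi => hf i (Finset.mem_insert_of_mem hi))]

lemma aux19_val_card {p m B : ℕ} (pp : p.Prime) (hm : m ≠ 0)
    (hB : m.factorization p ≤ B) :
    ((Icc 1 B).filter (fun j => p ^ j ∣ m)).card = m.factorization p := by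
  have heq : (Icc 1 B).filter (fun j => p ^ j ∣ m) = Icc 1 (m.factorization p) := by
    ext j
    simp only [mem_filter, mem_Icc, pp.pow_dvd_iff_le_factorization hm]
    omega
  rw [heq, Nat.card_Icc]
  omega

lemma aux19_vH (k n p : ℕ) (pp : p.Prime) (hodd : Odd p) (hk1 : 1 ≤ k) :
    (aux19H k n).factorization p
      = ∑ j ∈ Icc 1 (Nat.log p k), (aux19c k (p^j) n - 1) := by
  classical
  set B := 2*n + 2*k + 1 with hB_def
  set a : ℕ → ℕ := fun i => 2*n + 2*i + 1 with ha_def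
  set e := Nat.log p k with he_def
  have hp1 : 1 < p := pp.one_lt
  have h_a_ne : ∀ i ∈ range (k+1), a i ≠ 0 := fun i _ => by simp [ha_def]
  have hfa_le : ∀ i ∈ range (k+1), (a i).factorization p ≤ B := by
    intro i hi
    have h1 := Nat.factorization_lt (n := a i) p (h_a_ne i hi)
    have h2 : i ≤ k := by simpa [Nat.lt_succ_iff] using hi
    simp only [ha_def] at h1 ⊢
    omega
  -- valuation of the product
  have hvP : (aux19P k n).factorization p = ∑ j ∈ Icc 1 B, aux19c k (p^j) n := by
    have h0 : (aux19P k n).factorization p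
        = ∑ i ∈ range (k+1), (a i).factorization p := by
      unfold aux19P
      rw [Nat.factorization_prod h_a_ne, Finset.sum_apply']
    rw [h0]
    have h1 : ∀ i ∈ range (k+1), (a i).factorization p
        = ∑ j ∈ Icc 1 B, if p ^ j ∣ a i then 1 else 0 := by
      intro i hi
      rw [← Finset.card_filter]
      exact (aux19_val_card pp (h_a_ne i hi) (hfa_le i hi)).symm
    rw [Finset.sum_congr rfl h1, Finset.sum_comm]
    apply Finset.sum_congr rfl
    intro j _
    rw [← Finset.card_filter]
    rfl
  -- valuation of the lcm
  set M := (range (k+1)).sup (fun i => (a i).factorization p) with hM_def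
  have hvL : (aux19L k n).factorization p = M := aux19_lcm_fact h_a_ne p
  have hMB : M ≤ B := Finset.sup_le hfa_le
  have hML : M = ∑ j ∈ Icc 1 B, if 1 ≤ aux19c k (p^j) n then 1 else 0 := by
    rw [← Finset.card_filter]
    have heq : (Icc 1 B).filter (fun j => 1 ≤ aux19c k (p^j) n) = Icc 1 M := by
      ext j
      simp only [mem_filter, mem_Icc]
      constructor
      · rintro ⟨⟨hj1, hjB⟩, hc⟩
        refine ⟨hj1, ?_⟩
        have : ((range (k+1)).filter (fun i => p^j ∣ 2*n + 2*i + 1)).Nonempty :=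
          Finset.card_pos.mp hc
        obtain ⟨i, hi⟩ := this
        rw [Finset.mem_filter] at hi
        have hdvd : p ^ j ∣ a i := hi.2
        have := (pp.pow_dvd_iff_le_factorization (h_a_ne i hi.1)).mp hdvd
        exact le_trans this (Finset.le_sup (f := fun i => (a i).factorization p) hi.1)
      · rintro ⟨hj1, hjM⟩
        refine ⟨⟨hj1, le_trans hjM hMB⟩, ?_⟩
        have hex : ∃ i ∈ range (k+1), j ≤ (a i).factorization p := by
          rw [← Finset.le_sup_iff (show (⊥ : ℕ) < j by simp only [bot_eq_zero']; omega)]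
          exact hjM
        obtain ⟨i, hi, hji⟩ := hex
        have hdvd : p ^ j ∣ a i := (pp.pow_dvd_iff_le_factorization (h_a_ne i hi)).mpr hji
        exact Finset.card_pos.mpr ⟨i, Finset.mem_filter.mpr ⟨hi, hdvd⟩⟩
    rw [heq, Nat.card_Icc]
    omega
  -- valuation of H
  have hvH : (aux19H k n).factorization p
      = (aux19P k n).factorization p - (aux19L k n).factorization p := by
    have := Nat.factorization_mul (aux19H_ne k n) (aux19L_ne k n)
    have happ : (aux19P k n).factorization p
        = (aux19H k n).factorization p + (aux19L k n).factorization p := by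
      rw [← aux19H_mul k n, this]; rfl
    omega
  rw [hvH, hvP, hvL, hML, ← Finset.sum_tsub_distrib]
  · -- now a single sum over Icc 1 B; restrict to Icc 1 e
    have hek : e ≤ k := by
      have h1 : p ^ e ≤ k := by rw [he_def]; exact Nat.pow_log_le_self p (by omega)
      have h2 : e < 2 ^ e := Nat.lt_two_pow_self
      have h3 : 2 ^ e ≤ p ^ e := Nat.pow_le_pow_left (by omega) e
      omega
    rw [← Finset.sum_subset (Finset.Icc_subset_Icc_right (by omega : e ≤ B))]
    · apply Finset.sum_congr rfl
      intro j hj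
      rw [Finset.mem_Icc] at hj
      have hq_odd : Odd (p ^ j) := hodd.pow
      have hq_le : p ^ j ≤ k + 1 := by
        have h1 : p ^ j ≤ p ^ e := Nat.pow_le_pow_right (by omega) hj.2
        have h2 : p ^ e ≤ k := by
          rw [he_def]; exact Nat.pow_log_le_self p (by omega)
        omega
      have := aux19c_pos (k := k) (n := n) hq_odd hq_le
      rw [if_pos this]
    · intro j hj hj2
      rw [Finset.mem_Icc] at hj hj2
      have hje : e + 1 ≤ j := by omega
      have hq_odd : Odd (p ^ j) := hodd.pow
      have hk_lt : k < p ^ j := by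
        have h1 : k < p ^ (e + 1) := by rw [he_def]; exact Nat.lt_pow_succ_log_self hp1 k
        have h2 : p ^ (e+1) ≤ p ^ j := Nat.pow_le_pow_right (by omega) hje
        omega
      have hle := aux19c_le_one (k := k) (n := n) hq_odd hk_lt
      by_cases hc : 1 ≤ aux19c k (p^j) n
      · simp [hc]; omega
      · simp [hc]; omega
  · intro j _
    split <;> omega


def aux19Per (f : ℕ → ℕ) (T : ℕ) : Prop := ∀ n, 1 ≤ n → f (n + T) = f n

lemma aux19Per_mod {f : ℕ → ℕ} {T U : ℕ} (hU : aux19Per f U) (hT : aux19Per f T) :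
    aux19Per f (T % U) := by
  by_cases hU0 : U = 0
  · simpa [hU0] using hT
  · induction T using Nat.strong_induction_on with
    | _ T ih =>
      by_cases h : T < U
      · rwa [Nat.mod_eq_of_lt h]
      · push_neg at h
        rw [Nat.mod_eq_sub_mod h]
        apply ih (T - U) (by omega)
        intro n hn
        have h1 := hU (n + (T - U)) (by omega)
        have h2 := hT n hn
        have : n + (T - U) + U = n + T := by omega
        rw [this] at h1
        omega

lemma aux19Per_gcd {f : ℕ → ℕ} {T U : ℕ} (hT : aux19Per f T) (hU : aux19Per f U) :
    aux19Per f (Nat.gcd T U) := by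
  induction T, U using Nat.gcd.induction with
  | H0 U => simpa [Nat.gcd_zero_left] using hU
  | H1 T U hT0 ih =>
    rw [Nat.gcd_rec]
    exact ih (aux19Per_mod hT hU) hT

lemma aux19Per_mul {f : ℕ → ℕ} {T : ℕ} (hT : aux19Per f T) (m : ℕ) :
    aux19Per f (m * T) := by
  induction m with
  | zero => intro n hn; simp
  | succ m ih =>
    intro n hn
    have h1 := ih n hn
    have h2 := hT (n + m * T) (by omega)
    have : n + (m+1) * T = n + m * T + T := by ring
    rw [this, h2, h1]

lemma aux19Per_of_dvd {f : ℕ → ℕ} {T U : ℕ} (hT : aux19Per f T) (h : T ∣ U) :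
    aux19Per f U := by
  obtain ⟨m, rfl⟩ := h
  rw [mul_comm]
  exact aux19Per_mul hT m

/-- factorization of `lcm 1..k` -/
lemma aux19_lcmIcc_fact (k : ℕ) (hk : 1 ≤ k) (g : ℕ) (hg : g.Prime) :
    ((Finset.Icc 1 k).lcm id).factorization g = Nat.log g k := by
  have hne : ∀ i ∈ Finset.Icc 1 k, (id i : ℕ) ≠ 0 := by
    intro i hi
    rw [Finset.mem_Icc] at hi
    simp only [id]
    omega
  have h := aux19_lcm_fact hne g
  rw [h]
  apply le_antisymm
  · apply Finset.sup_le
    intro m hm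
    rw [Finset.mem_Icc] at hm
    have h1 : g ^ (Nat.factorization (id m) g) ∣ m := Nat.ordProj_dvd m g
    have h2 : g ^ (Nat.factorization (id m) g) ≤ k :=
      le_trans (Nat.le_of_dvd (by omega) h1) hm.2
    exact (Nat.le_log_iff_pow_le hg.one_lt (by omega)).mpr h2
  · have hmem : g ^ Nat.log g k ∈ Finset.Icc 1 k := by
      rw [Finset.mem_Icc]
      exact ⟨Nat.one_le_pow _ _ hg.pos, Nat.pow_log_le_self g (by omega)⟩
    have : Nat.factorization (id (g ^ Nat.log g k)) g = Nat.log g k := by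
      simp only [id]
      rw [hg.factorization_pow, Finsupp.single_apply, if_pos rfl]
    calc Nat.log g k = Nat.factorization (id (g ^ Nat.log g k)) g := this.symm
      _ ≤ _ := Finset.le_sup (f := fun i => (id i : ℕ).factorization g) hmem

/-- factorization of a product of distinct prime powers -/
lemma aux19_prodpow_fact (S : Finset ℕ) (hS : ∀ p ∈ S, p.Prime) (E : ℕ → ℕ)
    (g : ℕ) :
    (∏ p ∈ S, p ^ E p).factorization g = if g ∈ S then E g else 0 := by
  classical
  induction S using Finset.induction_on with
  | empty => simp
  | insert q S ha ih =>
    have hq : q.Prime := hS q (Finset.mem_insert_self q S)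
    have hSp : ∀ p ∈ S, p.Prime := fun p hp => hS p (Finset.mem_insert_of_mem hp)
    rw [Finset.prod_insert ha, Nat.factorization_mul (pow_ne_zero _ hq.pos.ne')
      (Finset.prod_ne_zero_iff.mpr (fun p hp => pow_ne_zero _ (hSp p hp).pos.ne'))]
    have happ : ((q ^ E q).factorization + (∏ p ∈ S, p ^ E p).factorization) g
        = (q ^ E q).factorization g + (∏ p ∈ S, p ^ E p).factorization g := rfl
    rw [happ, ih hSp, hq.factorization_pow, Finsupp.single_apply]
    by_cases hgq : q = g
    · subst hgq
      rw [if_pos rfl, if_pos (Finset.mem_insert_self _ _), if_neg ha]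
      omega
    · rw [if_neg hgq]
      by_cases hgS : g ∈ S
      · rw [if_pos hgS, if_pos (Finset.mem_insert_of_mem hgS)]
        omega
      · rw [if_neg hgS, if_neg (by
          simp only [Finset.mem_insert]
          rintro (h | h)
          · exact hgq h.symm
          · exact hgS h)]

/-- at most one exceptional prime -/
lemma aux19_unique_exc {k p p' : ℕ} (hk : 1 ≤ k) (hp : p.Prime) (hp' : p'.Prime)
    (hpk : p ≤ k) (hpk' : p' ≤ k)
    (hd : p ^ Nat.log p k ∣ k + 1) (hd' : p' ^ Nat.log p' k ∣ k + 1)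
    (hne : p ≠ p') : False := by
  set a := Nat.log p k
  set b := Nat.log p' k
  set x := p ^ a with hx
  set y := p' ^ b with hy
  have ha : 1 ≤ a := (Nat.le_log_iff_pow_le hp.one_lt (by omega)).mpr (by simpa using hpk)
  have hb : 1 ≤ b := (Nat.le_log_iff_pow_le hp'.one_lt (by omega)).mpr (by simpa using hpk')
  have hco : Nat.Coprime x y := Nat.Coprime.pow _ _ (Nat.coprime_primes hp hp' |>.mpr hne)
  have hxy : x * y ∣ k + 1 := hco.mul_dvd_of_dvd_of_dvd hd hd'
  obtain ⟨m, hm⟩ := hxy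
  have hm1 : 1 ≤ m := by
    rcases Nat.eq_zero_or_pos m with h | h
    · rw [h, mul_zero] at hm; omega
    · exact h
  have hpx : k < p * x := by
    rw [hx, ← pow_succ']
    exact Nat.lt_pow_succ_log_self hp.one_lt k
  have hpy : k < p' * y := by
    rw [hy, ← pow_succ']
    exact Nat.lt_pow_succ_log_self hp'.one_lt k
  have hx1 : 1 ≤ x := Nat.one_le_pow _ _ hp.pos
  have hy1 : 1 ≤ y := Nat.one_le_pow _ _ hp'.pos
  -- p * x ≥ k+1 = x*y*m  ⇒  p ≥ y*m
  have h1 : p ≥ y * m := by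
    have : x * (y * m) ≤ x * p := by
      rw [mul_comm x p]
      have : x * y * m = k + 1 := hm.symm
      nlinarith
    exact le_of_mul_le_mul_left this (by omega)
  have h2 : p' ≥ x * m := by
    have : y * (x * m) ≤ y * p' := by
      rw [mul_comm y p']
      nlinarith
    exact le_of_mul_le_mul_left this (by omega)
  have hxp : p ≤ x := Nat.le_self_pow (by omega) p
  have hyp : p' ≤ y := Nat.le_self_pow (by omega) p'
  have : p = p' := by nlinarith
  exact hne this

lemma aux19H_two (k n : ℕ) (hk1 : 1 ≤ k) : (aux19H k n).factorization 2 = 0 := by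
  have h_a_ne : ∀ i ∈ range (k+1), (2*n + 2*i + 1) ≠ 0 := fun i _ => by omega
  have hP : (aux19P k n).factorization 2 = 0 := by
    unfold aux19P
    rw [Nat.factorization_prod h_a_ne, Finset.sum_apply']
    apply Finset.sum_eq_zero
    intro i _
    exact Nat.factorization_eq_zero_of_not_dvd (by omega)
  have hmul := Nat.factorization_mul (aux19H_ne k n) (aux19L_ne k n)
  have happ : (aux19P k n).factorization 2
      = (aux19H k n).factorization 2 + (aux19L k n).factorization 2 := by
    rw [← aux19H_mul k n, hmul]; rfl
  omega

theorem aux19_main (k : ℕ) (hk : 2 ≤ k) (D : ℕ) (SD : Finset ℕ)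
    (hSD : ∀ p ∈ SD, p.Prime ∧ Odd p ∧ p ≤ k ∧ p ^ Nat.log p k ∣ (k+1))
    (hD : D = ∏ p ∈ SD, p ^ Nat.log p k)
    (hcover : ∀ p, p.Prime → Odd p → p ≤ k → p ^ Nat.log p k ∣ (k+1) → p ∈ SD) :
    IsLeast {T : ℕ | 0 < T ∧ ∀ n : ℕ, 1 ≤ n →
        aux19H k (n + T) = aux19H k n}
      ((Finset.Icc 1 k).lcm id / (2 ^ Nat.log 2 k * D)) := by
  classical
  set S : Finset ℕ := (range (k+1)).filter Nat.Prime with hS_def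
  have hS_prime : ∀ p ∈ S, p.Prime := fun p hp => (Finset.mem_filter.mp hp).2
  have hS_mem : ∀ p, p.Prime → (p ∈ S ↔ p ≤ k) := by
    intro p pp
    simp [hS_def, Finset.mem_filter, Nat.lt_succ_iff, pp]
  have h2S : 2 ∈ S := (hS_mem 2 Nat.prime_two).mpr hk
  have hSD_sub : SD ⊆ S.erase 2 := by
    intro p hp
    obtain ⟨pp, podd, hpk, _⟩ := hSD p hp
    rw [Finset.mem_erase]
    refine ⟨?_, (hS_mem p pp).mpr hpk⟩
    rintro rfl
    simp [Nat.odd_iff] at podd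
  set S' : Finset ℕ := (S.erase 2) \ SD with hS'_def
  have hS'_prime : ∀ p ∈ S', p.Prime :=
    fun p hp => hS_prime p (Finset.mem_of_mem_erase (Finset.mem_sdiff.mp hp).1)
  have hS'_spec : ∀ p ∈ S', p.Prime ∧ Odd p ∧ p ≤ k ∧ ¬ p ^ Nat.log p k ∣ (k+1) := by
    intro p hp
    rw [Finset.mem_sdiff, Finset.mem_erase] at hp
    obtain ⟨⟨hp2, hpS⟩, hpSD⟩ := hp
    have pp := hS_prime p hpS
    have podd : Odd p := pp.odd_of_ne_two hp2
    have hpk : p ≤ k := (hS_mem p pp).mp hpS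
    exact ⟨pp, podd, hpk, fun hdvd => hpSD (hcover p pp podd hpk hdvd)⟩
  set T0 : ℕ := ∏ p ∈ S', p ^ Nat.log p k with hT0_def
  have hT0_ne : T0 ≠ 0 :=
    Finset.prod_ne_zero_iff.mpr (fun p hp => pow_ne_zero _ (hS'_prime p hp).pos.ne')
  have hD_ne : 2 ^ Nat.log 2 k * D ≠ 0 := by
    rw [hD]
    exact mul_ne_zero (pow_ne_zero _ (by omega))
      (Finset.prod_ne_zero_iff.mpr
        (fun p hp => pow_ne_zero _ (hSD p hp).1.pos.ne'))
  -- the lcm as a product over S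
  have hLk_ne : ((Finset.Icc 1 k).lcm id) ≠ 0 := by
    intro h
    rw [Finset.lcm_eq_zero_iff] at h
    obtain ⟨i, hi, hz⟩ := h
    rw [Finset.mem_Icc] at hi
    simp only [id] at hz
    omega
  have hLk_eq : (Finset.Icc 1 k).lcm id = ∏ p ∈ S, p ^ Nat.log p k := by
    rw [Nat.eq_iff_prime_padicValNat_eq _ _ hLk_ne
      (Finset.prod_ne_zero_iff.mpr (fun p hp => pow_ne_zero _ (hS_prime p hp).pos.ne'))]
    intro g hg
    rw [← Nat.factorization_def _ hg, ← Nat.factorization_def _ hg,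
      aux19_lcmIcc_fact k (by omega) g hg, aux19_prodpow_fact S hS_prime _ g]
    by_cases hgS : g ∈ S
    · rw [if_pos hgS]
    · rw [if_neg hgS]
      have : k < g := by
        by_contra h
        exact hgS ((hS_mem g hg).mpr (by omega))
      exact Nat.log_eq_zero_iff.mpr (Or.inl this)
  have hprod : (Finset.Icc 1 k).lcm id = 2 ^ Nat.log 2 k * D * T0 := by
    rw [hLk_eq, hD, hT0_def]
    rw [← Finset.insert_erase h2S, Finset.prod_insert (Finset.notMem_erase 2 S)]
    rw [← Finset.prod_sdiff hSD_sub, ← hS'_def]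
    ring
  have hquot : (Finset.Icc 1 k).lcm id / (2 ^ Nat.log 2 k * D) = T0 := by
    rw [hprod, Nat.mul_div_cancel_left _ (Nat.pos_of_ne_zero hD_ne)]
  rw [hquot]
  constructor
  · -- membership
    refine ⟨Nat.pos_of_ne_zero hT0_ne, ?_⟩
    intro n hn
    rw [Nat.eq_iff_prime_padicValNat_eq _ _ (aux19H_ne k (n+T0)) (aux19H_ne k n)]
    intro g hg
    rw [← Nat.factorization_def _ hg, ← Nat.factorization_def _ hg]
    by_cases hg2 : g = 2
    · subst hg2
      rw [aux19H_two k _ (by omega), aux19H_two k _ (by omega)]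
    · have hgodd : Odd g := hg.odd_of_ne_two hg2
      rw [aux19_vH k _ g hg hgodd (by omega), aux19_vH k _ g hg hgodd (by omega)]
      apply Finset.sum_congr rfl
      intro j hj
      rw [Finset.mem_Icc] at hj
      congr 1
      by_cases hgk : g ≤ k
      · by_cases hgSD : g ∈ SD
        · obtain ⟨_, _, _, hdvd⟩ := hSD g hgSD
          have hjd : g ^ j ∣ k + 1 :=
            dvd_trans (pow_dvd_pow g hj.2) hdvd
          rw [aux19c_const (hgodd.pow) hjd, aux19c_const (hgodd.pow) hjd]
        · have hgS' : g ∈ S' := by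
            rw [hS'_def, Finset.mem_sdiff, Finset.mem_erase]
            exact ⟨⟨hg2, (hS_mem g hg).mpr hgk⟩, hgSD⟩
          have hdvdT0 : g ^ Nat.log g k ∣ T0 := by
            rw [hT0_def]
            exact Finset.dvd_prod_of_mem _ hgS'
          exact aux19c_shift (dvd_trans (pow_dvd_pow g hj.2) hdvdT0)
      · -- g > k: log g k = 0, Icc 1 0 empty, contradiction with hj
        have : Nat.log g k = 0 := Nat.log_eq_zero_iff.mpr (Or.inl (by omega))
        omega
  · -- lower bound
    rintro T ⟨hTpos, hTper⟩
    have hT_ne : T ≠ 0 := by omega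
    apply Nat.le_of_dvd hTpos
    rw [← Nat.factorization_le_iff_dvd hT0_ne hT_ne]
    intro g
    rw [hT0_def, aux19_prodpow_fact S' hS'_prime _ g]
    by_cases hgS' : g ∈ S'
    · rw [if_pos hgS']
      obtain ⟨pp, podd, hpk, hnexc⟩ := hS'_spec g hgS'
      set e := Nat.log g k with he_def
      have he1 : 1 ≤ e := by
        rw [he_def]
        exact (Nat.le_log_iff_pow_le pp.one_lt (by omega)).mpr (by simpa using hpk)
      have hqk : g ^ e ≤ k := by rw [he_def]; exact Nat.pow_log_le_self g (by omega)
      -- f is the g-valuation of H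
      set f : ℕ → ℕ := fun m => (aux19H k m).factorization g with hf_def
      have hPerT : aux19Per f T := by
        intro n hn
        simp only [hf_def]
        rw [hTper n hn]
      have hPerQ : aux19Per f (g ^ e) := by
        intro n hn
        simp only [hf_def]
        rw [aux19_vH k _ g pp podd (by omega), aux19_vH k _ g pp podd (by omega)]
        apply Finset.sum_congr rfl
        intro j hj
        rw [Finset.mem_Icc] at hj
        rw [aux19c_shift (pow_dvd_pow g hj.2)]
      -- show g^e ∣ T
      by_contra hnd
      have hge : ¬ g ^ e ∣ T :=
        fun h => hnd ((pp.pow_dvd_iff_le_factorization hT_ne).mp h)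
      have hPerG : aux19Per f (Nat.gcd T (g^e)) := aux19Per_gcd hPerT hPerQ
      have hgcd_dvd : Nat.gcd T (g^e) ∣ g ^ e := Nat.gcd_dvd_right _ _
      obtain ⟨i, hi_le, hi_eq⟩ := (Nat.dvd_prime_pow pp).mp hgcd_dvd
      have hie : i ≠ e := by
        rintro rfl
        exact hge (hi_eq ▸ Nat.gcd_dvd_left _ _)
      have hdvd_em1 : Nat.gcd T (g^e) ∣ g ^ (e-1) := by
        rw [hi_eq]
        exact pow_dvd_pow g (by omega)
      have hPerE : aux19Per f (g ^ (e-1)) := aux19Per_of_dvd hPerG hdvd_em1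
      -- witness
      obtain ⟨n, hn1, hne⟩ := aux19c_witness pp.two_le (podd.pow) he1 hqk hnexc
      apply hne
      have hfeq := hPerE n hn1
      simp only [hf_def] at hfeq
      rw [aux19_vH k _ g pp podd (by omega), aux19_vH k _ g pp podd (by omega)] at hfeq
      -- split off the top term j = e
      have hsplit : ∀ m, ∑ j ∈ Icc 1 e, (aux19c k (g^j) m - 1)
          = (∑ j ∈ Icc 1 (e-1), (aux19c k (g^j) m - 1)) + (aux19c k (g^e) m - 1) := by
        intro m
        have h := Finset.sum_Icc_succ_top (a := 1) (b := e - 1) (by omega)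
          (fun j => aux19c k (g^j) m - 1)
        rw [show e - 1 + 1 = e by omega] at h
        exact h
      rw [hsplit, hsplit] at hfeq
      have hlow : ∀ j ∈ Icc 1 (e-1), (aux19c k (g^j) (n + g^(e-1)) - 1)
          = (aux19c k (g^j) n - 1) := by
        intro j hj
        rw [Finset.mem_Icc] at hj
        rw [aux19c_shift (pow_dvd_pow g hj.2)]
      rw [Finset.sum_congr rfl hlow] at hfeq
      have hpos1 : 1 ≤ aux19c k (g^e) (n + g^(e-1)) := aux19c_pos (podd.pow) (by omega)
      have hpos2 : 1 ≤ aux19c k (g^e) n := aux19c_pos (podd.pow) (by omega)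
      omega
    · rw [if_neg hgS']
      omega

theorem stmt19 (k : ℕ) (hk : 2 ≤ k) :
    ∃ D : ℕ,
      ((∃ p : ℕ, p.Prime ∧ Odd p ∧ p ≤ k ∧ Nat.log p k ≤ padicValNat p (k + 1) ∧
          D = p ^ Nat.log p k) ∨
        ((¬ ∃ p : ℕ, p.Prime ∧ Odd p ∧ p ≤ k ∧ Nat.log p k ≤ padicValNat p (k + 1)) ∧
          D = 1)) ∧
      IsLeast {T : ℕ | 0 < T ∧ ∀ n : ℕ, 1 ≤ n →
          (∏ i ∈ Finset.range (k+1), (2 * (n + T) + 2 * i + 1)) /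
              (Finset.range (k+1)).lcm (fun i => 2 * (n + T) + 2 * i + 1) =
            (∏ i ∈ Finset.range (k+1), (2 * n + 2 * i + 1)) /
              (Finset.range (k+1)).lcm (fun i => 2 * n + 2 * i + 1)}
        ((Finset.Icc 1 k).lcm id / (2 ^ Nat.log 2 k * D)) := by
  have hval_dvd : ∀ p : ℕ, p.Prime →
      (Nat.log p k ≤ padicValNat p (k + 1) ↔ p ^ Nat.log p k ∣ (k+1)) := by
    intro p pp
    rw [← Nat.factorization_def _ pp]
    exact (pp.pow_dvd_iff_le_factorization (by omega)).symm
  by_cases hexc : ∃ p : ℕ, p.Prime ∧ Odd p ∧ p ≤ k ∧ Nat.log p k ≤ padicValNat p (k + 1)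
  · obtain ⟨p0, pp0, podd0, hp0k, hp0v⟩ := hexc
    refine ⟨p0 ^ Nat.log p0 k, Or.inl ⟨p0, pp0, podd0, hp0k, hp0v, rfl⟩, ?_⟩
    exact aux19_main k hk _ {p0}
      (by
        intro p hp
        rw [Finset.mem_singleton] at hp
        subst hp
        exact ⟨pp0, podd0, hp0k, (hval_dvd _ pp0).mp hp0v⟩)
      (by rw [Finset.prod_singleton])
      (by
        intro p pp podd hpk hdvd
        rw [Finset.mem_singleton]
        by_contra hne
        exact aux19_unique_exc (by omega) pp pp0 hpk hp0k hdvd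
          ((hval_dvd p0 pp0).mp hp0v) hne)
  · refine ⟨1, Or.inr ⟨hexc, rfl⟩, ?_⟩
    exact aux19_main k hk 1 ∅
      (by simp)
      (by simp)
      (by
        intro p pp podd hpk hdvd
        exact absurd ⟨p, pp, podd, hpk, (hval_dvd p pp).mpr hdvd⟩ hexc)
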